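/- (Lindström–Gessel–Viennot) Let Q_1,...,Q_t and P_1,...,P_t be points in Z×Z such that any system of t paths with steps (1,0), (0,-1) joining Q_i to P_{σ(i)} for a permutation σ and consisting of pairwise vertex-disjoint paths forces σ to be the identity. Then the number of t-tuples of pairwise vertex-disjoint paths with path i going from Q_i to P_i equals the determinant of the t×t matrix whose (i,j) entry is the number of paths from Q_i to P_j. -/

import Mathlib

def Step (p q : ℤ × ℤ) : Prop := q = p + (1, 0) ∨ q = p + (0, -1)

def IsPathFromTo (l : List (ℤ × ℤ)) (p q : ℤ × ℤ) : Prop :=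
  l.Chain' Step ∧ l.head? = some p ∧ l.getLast? = some q

namespace LGV

open List

abbrev Pt := ℤ × ℤ

def key (p : Pt) : ℤ := p.1 - p.2

lemma key_step {p q : Pt} (h : Step p q) : key q = key p + 1 := by
  rcases h with h | h <;> subst h <;> simp [key, Prod.fst_add, Prod.snd_add] <;> ring

lemma pairwise_key {l : List Pt} (h : l.Chain' Step) :
    l.Pairwise (fun p q => key p < key q) := by
  haveI : IsTrans Pt (fun p q => key p < key q) := ⟨fun _ _ _ => lt_trans⟩
  rw [← List.isChain_iff_pairwise]
  exact h.imp (fun {a b} hs => by rw [key_step hs]; omega)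

lemma nodup_of_chain {l : List Pt} (h : l.Chain' Step) : l.Nodup :=
  (pairwise_key h).imp (fun hlt => by rintro rfl; exact lt_irrefl _ hlt)

def follow : Pt → List Bool → List Pt
  | p, [] => [p]
  | p, true :: bs => p :: follow (p + (1, 0)) bs
  | p, false :: bs => p :: follow (p + (0, -1)) bs

lemma exists_follow : ∀ (l : List Pt) (x : Pt), List.Chain' Step (x :: l) →
    ∃ bs : List Bool, bs.length = l.length ∧ x :: l = follow x bs := by
  intro l
  induction l with
  | nil => intro x _; exact ⟨[], rfl, rfl⟩
  | cons y r ih =>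
    intro x h
    simp only [List.Chain', List.isChain_cons_cons] at h
    obtain ⟨bs, hlen, hbs⟩ := ih y h.2
    rcases h.1 with hs | hs
    · exact ⟨true :: bs, by simp [hlen], by rw [follow, ← hs, ← hbs]⟩
    · exact ⟨false :: bs, by simp [hlen], by rw [follow, ← hs, ← hbs]⟩

lemma length_eq {l : List Pt} : ∀ (x : Pt), List.Chain' Step (x :: l) →
    (l.length : ℤ) = key ((x :: l).getLast (by simp)) - key x := by
  induction l with
  | nil => intro x _; simp
  | cons y r ih =>
    intro x h
    simp only [List.Chain', List.isChain_cons_cons] at h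
    have h2 := ih y h.2
    have h3 := key_step h.1
    rw [List.getLast_cons (by simp)]
    simp only [List.length_cons] at h2 ⊢
    push_cast
    omega

lemma pathFinite (p q : Pt) : Finite {l : List Pt // IsPathFromTo l p q} := by
  classical
  set N : ℕ := (key q - key p).toNat with hN
  have hfin : Finite {bs : List Bool // bs.length ≤ N} := by
    have := List.finite_length_le Bool N
    exact this.to_subtype
  have hexists : ∀ l : {l : List Pt // IsPathFromTo l p q},
      ∃ bs : List Bool, bs.length ≤ N ∧ l.1 = follow p bs := by
    rintro ⟨l, hc, hh, hl⟩
    match l, hh with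
    | x :: r, hh =>
      have hx : x = p := by simpa using hh
      subst hx
      obtain ⟨bs, hlen, hbs⟩ := exists_follow r x hc
      refine ⟨bs, ?_, hbs⟩
      have hlast : (x :: r).getLast (by simp) = q := by
        rwa [List.getLast?_eq_getLast (l := x :: r) (by simp), Option.some_inj] at hl
      have := length_eq (l := r) x hc
      rw [hlast] at this
      omega
  choose f hf1 hf2 using hexists
  refine Finite.of_injective (fun l => (⟨f l, hf1 l⟩ : {bs : List Bool // bs.length ≤ N})) ?_
  intro l₁ l₂ h
  have : f l₁ = f l₂ := congrArg Subtype.val h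
  ext1
  rw [hf2 l₁, hf2 l₂, this]

end LGV
namespace LGV

open List

lemma exists_first {α : Type*} (p : α → Prop) :
    ∀ l : List α, (∃ x ∈ l, p x) →
      ∃ a v b, l = a ++ v :: b ∧ p v ∧ ∀ x ∈ a, ¬ p x := by
  intro l
  induction l with
  | nil => rintro ⟨x, hx, -⟩; simp at hx
  | cons x r ih =>
    intro h
    by_cases hx : p x
    · exact ⟨[], x, r, rfl, hx, by simp⟩
    · obtain ⟨y, hy, hpy⟩ := h
      rcases List.mem_cons.1 hy with rfl | hy
      · exact absurd hpy hx
      · obtain ⟨a, v, b, h1, h2, h3⟩ := ih ⟨y, hy, hpy⟩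
        refine ⟨x :: a, v, b, by rw [h1]; rfl, h2, ?_⟩
        intro z hz
        rcases List.mem_cons.1 hz with rfl | hz
        · exact hx
        · exact h3 z hz

lemma first_unique {α : Type*} (p : α → Prop) :
    ∀ (a₁ : List α) (v₁ : α) (b₁ : List α) (a₂ : List α) (v₂ : α) (b₂ : List α),
      a₁ ++ v₁ :: b₁ = a₂ ++ v₂ :: b₂ → p v₁ → p v₂ →
      (∀ x ∈ a₁, ¬ p x) → (∀ x ∈ a₂, ¬ p x) →
      a₁ = a₂ ∧ v₁ = v₂ ∧ b₁ = b₂ := by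
  intro a₁
  induction a₁ with
  | nil =>
    intro v₁ b₁ a₂ v₂ b₂ heq hp1 hp2 _ hc2
    cases a₂ with
    | nil =>
      simp only [List.nil_append, List.cons.injEq] at heq
      exact ⟨rfl, heq.1, heq.2⟩
    | cons y a₂ =>
      simp only [List.nil_append, List.cons_append, List.cons.injEq] at heq
      exact absurd (heq.1 ▸ hp1) (hc2 y (List.mem_cons_self))
  | cons z a₁ ih =>
    intro v₁ b₁ a₂ v₂ b₂ heq hp1 hp2 hc1 hc2
    cases a₂ with
    | nil =>
      simp only [List.nil_append, List.cons_append, List.cons.injEq] at heq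
      exact absurd (heq.1 ▸ hp2) (hc1 z (List.mem_cons_self))
    | cons y a₂ =>
      simp only [List.cons_append, List.cons.injEq] at heq
      obtain ⟨h1, h2, h3⟩ := ih v₁ b₁ a₂ v₂ b₂ heq.2 hp1 hp2
        (fun x hx => hc1 x (List.mem_cons_of_mem _ hx))
        (fun x hx => hc2 x (List.mem_cons_of_mem _ hx))
      exact ⟨by rw [heq.1, h1], h2, h3⟩

lemma nodup_split_unique {α : Type*} {l : List α} (hl : l.Nodup) {v : α}
    {c₁ d₁ c₂ d₂ : List α} (h1 : l = c₁ ++ v :: d₁) (h2 : l = c₂ ++ v :: d₂) :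
    c₁ = c₂ ∧ d₁ = d₂ := by
  have hv1 : v ∉ c₁ := by
    rw [h1, List.nodup_append] at hl
    exact fun hv => hl.2.2 v hv v List.mem_cons_self rfl
  have hv2 : v ∉ c₂ := by
    rw [h2, List.nodup_append] at hl
    exact fun hv => hl.2.2 v hv v List.mem_cons_self rfl
  obtain ⟨h, _, h'⟩ := first_unique (fun x => x = v) c₁ v d₁ c₂ v d₂
    (h1 ▸ h2) rfl rfl (fun x hx hxv => hv1 (hxv ▸ hx)) (fun x hx hxv => hv2 (hxv ▸ hx))
  exact ⟨h, h'⟩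

end LGV
namespace LGV

open List

variable {t : ℕ}

def Disj (l : Fin t → List Pt) : Prop := ∀ i j, i ≠ j → ∀ x, x ∈ l i → x ∉ l j

def Touch (l : Fin t → List Pt) (k : Fin t) : Prop :=
  ∃ m, m ≠ k ∧ ∃ x, x ∈ l k ∧ x ∈ l m

def SwapRel (σ : Equiv.Perm (Fin t)) (l : Fin t → List Pt)
    (σ' : Equiv.Perm (Fin t)) (l' : Fin t → List Pt) : Prop :=
  ∃ (i j : Fin t) (v : Pt) (a b c d : List Pt),
    i < j ∧
    l i = a ++ v :: b ∧
    l j = c ++ v :: d ∧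
    (∀ k, Touch l k → i ≤ k) ∧
    (∀ z ∈ a, ∀ m, m ≠ i → z ∉ l m) ∧
    (∀ m, m ≠ i → v ∈ l m → j ≤ m) ∧
    σ' = σ * Equiv.swap i j ∧
    l' = Function.update (Function.update l i (a ++ v :: d)) j (c ++ v :: b)

lemma swap_exists {σ : Equiv.Perm (Fin t)} {l : Fin t → List Pt} (hnd : ¬ Disj l) :
    ∃ σ' l', SwapRel σ l σ' l' := by
  classical
  have h1 : ∃ k, Touch l k := by
    unfold Disj at hnd; push_neg at hnd
    obtain ⟨i, j, hij, x, hxi, hxj⟩ := hnd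
    exact ⟨i, j, Ne.symm hij, x, hxi, hxj⟩
  let S : Finset (Fin t) := Finset.univ.filter (fun k => Touch l k)
  have hS : S.Nonempty := ⟨h1.choose, by simp [S]; exact h1.choose_spec⟩
  set i := S.min' hS with hi
  have hiT : Touch l i := by have := S.min'_mem hS; simpa [S] using this
  have himin : ∀ k, Touch l k → i ≤ k := fun k hk => S.min'_le k (by simp [S, hk])
  obtain ⟨m0, hm0, x0, hx0i, hx0m⟩ := hiT
  obtain ⟨a, v, b, hab, hpv, hclean⟩ :=
    exists_first (fun x => ∃ m, m ≠ i ∧ x ∈ l m) (l i) ⟨x0, hx0i, ⟨m0, hm0, hx0m⟩⟩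
  obtain ⟨j0, hj0, hvj0⟩ := hpv
  let J : Finset (Fin t) := Finset.univ.filter (fun m => m ≠ i ∧ v ∈ l m)
  have hJ : J.Nonempty := ⟨j0, by simp [J]; exact ⟨hj0, hvj0⟩⟩
  set j := J.min' hJ with hj
  have hjmem : j ≠ i ∧ v ∈ l j := by have := J.min'_mem hJ; simpa [J] using this
  have hjmin : ∀ m, m ≠ i → v ∈ l m → j ≤ m := fun m h1 h2 =>
    J.min'_le m (by simp [J]; exact ⟨h1, h2⟩)
  have hvi : v ∈ l i := by rw [hab]; exact List.mem_append_right _ (List.mem_cons_self)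
  have hij : i < j := lt_of_le_of_ne
    (himin j ⟨i, Ne.symm hjmem.1, v, hjmem.2, hvi⟩) (Ne.symm hjmem.1)
  obtain ⟨c, d, hcd⟩ := List.append_of_mem hjmem.2
  exact ⟨σ * Equiv.swap i j, _, i, j, v, a, b, c, d, hij, hab, hcd, himin,
    (fun z hz m hm hzm => hclean z hz ⟨m, hm, hzm⟩), hjmin, rfl, rfl⟩

lemma swap_unique {σ : Equiv.Perm (Fin t)} {l : Fin t → List Pt}
    {σ₁ l₁ σ₂ l₂} (hnd : ∀ k, (l k).Nodup)
    (h1 : SwapRel σ l σ₁ l₁) (h2 : SwapRel σ l σ₂ l₂) : σ₁ = σ₂ ∧ l₁ = l₂ := by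
  obtain ⟨i₁, j₁, v₁, a₁, b₁, c₁, d₁, hij₁, hab₁, hcd₁, hmin₁, hcl₁, hjm₁, hσ₁, hl₁⟩ := h1
  obtain ⟨i₂, j₂, v₂, a₂, b₂, c₂, d₂, hij₂, hab₂, hcd₂, hmin₂, hcl₂, hjm₂, hσ₂, hl₂⟩ := h2
  have hv1i : v₁ ∈ l i₁ := by rw [hab₁]; exact List.mem_append_right _ (List.mem_cons_self)
  have hv1j : v₁ ∈ l j₁ := by rw [hcd₁]; exact List.mem_append_right _ (List.mem_cons_self)
  have hv2i : v₂ ∈ l i₂ := by rw [hab₂]; exact List.mem_append_right _ (List.mem_cons_self)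
  have hv2j : v₂ ∈ l j₂ := by rw [hcd₂]; exact List.mem_append_right _ (List.mem_cons_self)
  have hT1 : Touch l i₁ := ⟨j₁, hij₁.ne', v₁, hv1i, hv1j⟩
  have hT2 : Touch l i₂ := ⟨j₂, hij₂.ne', v₂, hv2i, hv2j⟩
  have hi : i₁ = i₂ := le_antisymm (hmin₁ i₂ hT2) (hmin₂ i₁ hT1)
  subst hi
  obtain ⟨ha, hv, hb⟩ := first_unique (fun z => ∃ m, m ≠ i₁ ∧ z ∈ l m)
    a₁ v₁ b₁ a₂ v₂ b₂ (hab₁ ▸ hab₂) ⟨j₁, hij₁.ne', hv1j⟩ ⟨j₂, hij₂.ne', hv2j⟩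
    (fun z hz hp => hcl₁ z hz hp.choose hp.choose_spec.1 hp.choose_spec.2)
    (fun z hz hp => hcl₂ z hz hp.choose hp.choose_spec.1 hp.choose_spec.2)
  subst ha; subst hv; subst hb
  have hjj : j₁ = j₂ := le_antisymm (hjm₁ j₂ hij₂.ne' hv2j) (hjm₂ j₁ hij₁.ne' hv1j)
  subst hjj
  obtain ⟨hc, hd⟩ := nodup_split_unique (hnd j₁) hcd₁ hcd₂
  subst hc; subst hd
  exact ⟨hσ₁.trans hσ₂.symm, hl₁.trans hl₂.symm⟩

lemma swap_symm {σ : Equiv.Perm (Fin t)} {l : Fin t → List Pt} {σ' l'}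
    (hnd : ∀ k, (l k).Nodup) (h : SwapRel σ l σ' l') : SwapRel σ' l' σ l := by
  obtain ⟨i, j, v, a, b, c, d, hij, hab, hcd, hmin, hcl, hjm, hσ, hl'⟩ := h
  have hne : i ≠ j := ne_of_lt hij
  have hli : l' i = a ++ v :: d := by
    rw [hl', Function.update_of_ne hne, Function.update_self]
  have hlj : l' j = c ++ v :: b := by rw [hl', Function.update_self]
  have hlk : ∀ k, k ≠ i → k ≠ j → l' k = l k := fun k h1 h2 => by
    rw [hl', Function.update_of_ne h2, Function.update_of_ne h1]
  have hmem : ∀ m z, z ∈ l' m → z ∈ l m ∨ z ∈ l i ∨ z ∈ l j := by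
    intro m z hz
    by_cases h1 : m = j
    · subst h1; rw [hlj] at hz
      rcases List.mem_append.1 hz with h | h
      · right; right; rw [hcd]; exact List.mem_append_left _ h
      · rcases List.mem_cons.1 h with rfl | h
        · right; right; rw [hcd]; exact List.mem_append_right _ (List.mem_cons_self)
        · right; left; rw [hab]; exact List.mem_append_right _ (List.mem_cons_of_mem _ h)
    · by_cases h2 : m = i
      · subst h2; rw [hli] at hz
        rcases List.mem_append.1 hz with h | h
        · right; left; rw [hab]; exact List.mem_append_left _ h
        · rcases List.mem_cons.1 h with rfl | h
          · right; left; rw [hab]; exact List.mem_append_right _ (List.mem_cons_self)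
          · right; right; rw [hcd]; exact List.mem_append_right _ (List.mem_cons_of_mem _ h)
      · left; rwa [hlk m h2 h1] at hz
  refine ⟨i, j, v, a, d, c, b, hij, hli, hlj, ?_, ?_, ?_, ?_, ?_⟩
  · -- minimality for l'
    intro k hk
    by_contra hlt
    push_neg at hlt
    obtain ⟨m, hm, z, hzk, hzm⟩ := hk
    have hki : k ≠ i := ne_of_lt hlt
    have hkj : k ≠ j := ne_of_lt (lt_trans hlt hij)
    rw [hlk k hki hkj] at hzk
    rcases hmem m z hzm with h | h | h
    · exact absurd (hmin k ⟨m, hm, z, hzk, h⟩) (not_le.2 hlt)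
    · exact absurd (hmin k ⟨i, Ne.symm hki, z, hzk, h⟩) (not_le.2 hlt)
    · exact absurd (hmin k ⟨j, Ne.symm hkj, z, hzk, h⟩) (not_le.2 hlt)
  · -- cleanliness of a w.r.t. l'
    intro z hz m hm hzm'
    by_cases h1 : m = j
    · subst h1; rw [hlj] at hzm'
      rcases List.mem_append.1 hzm' with h | h
      · exact hcl z hz m hm (by rw [hcd]; exact List.mem_append_left _ h)
      · rcases List.mem_cons.1 h with rfl | h
        · exact hcl z hz m hm
            (by rw [hcd]; exact List.mem_append_right _ (List.mem_cons_self))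
        · have hnod := hnd i
          rw [hab, List.nodup_append] at hnod
          exact hnod.2.2 z hz z (List.mem_cons_of_mem _ h) rfl
    · rw [hlk m hm h1] at hzm'; exact hcl z hz m hm hzm'
  · -- j-minimality for l'
    intro m hm hvm
    by_cases h1 : m = j
    · subst h1; exact le_refl _
    · rw [hlk m hm h1] at hvm; exact hjm m hm hvm
  · rw [hσ, mul_assoc, Equiv.swap_mul_self, mul_one]
  · funext k
    by_cases h1 : k = j
    · subst h1; rw [Function.update_self]; exact hcd
    · rw [Function.update_of_ne h1]
      by_cases h2 : k = i
      · subst h2; rw [Function.update_self]; exact hab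
      · rw [Function.update_of_ne h2]; exact (hlk k h2 h1).symm

end LGV
namespace LGV

open List

variable {t : ℕ}

def Sys (Q P : Fin t → Pt) (σ : Equiv.Perm (Fin t)) (l : Fin t → List Pt) : Prop :=
  ∀ i, IsPathFromTo (l i) (Q i) (P (σ i))

lemma head?_stable {α : Type*} (a : List α) (v : α) (b d : List α) :
    (a ++ v :: d).head? = (a ++ v :: b).head? := by cases a <;> simp

lemma glue {x1 b x2 d : List Pt} {v : Pt}
    (h1 : List.Chain' Step (x1 ++ v :: b)) (h2 : List.Chain' Step (x2 ++ v :: d)) :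
    List.Chain' Step (x1 ++ v :: d) := by
  simp only [List.Chain', List.isChain_append] at h1 h2 ⊢
  refine ⟨h1.1, h2.2.1, ?_⟩
  intro x hx y hy
  simp only [List.head?_cons, Option.mem_some_iff] at hy
  subst hy
  exact h1.2.2 x hx v (by simp)

lemma swap_sys {Q P : Fin t → Pt} {σ : Equiv.Perm (Fin t)} {l : Fin t → List Pt} {σ' l'}
    (hsys : Sys Q P σ l) (h : SwapRel σ l σ' l') : Sys Q P σ' l' ∧ ¬ Disj l' := by
  obtain ⟨i, j, v, a, b, c, d, hij, hab, hcd, hmin, hcl, hjm, hσ, hl'⟩ := h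
  have hne : i ≠ j := ne_of_lt hij
  have hli : l' i = a ++ v :: d := by
    rw [hl', Function.update_of_ne hne, Function.update_self]
  have hlj : l' j = c ++ v :: b := by rw [hl', Function.update_self]
  have hlk : ∀ k, k ≠ i → k ≠ j → l' k = l k := fun k h1 h2 => by
    rw [hl', Function.update_of_ne h2, Function.update_of_ne h1]
  constructor
  · intro k
    obtain ⟨hc1, hh1, hl1⟩ := hsys i
    obtain ⟨hc2, hh2, hl2⟩ := hsys j
    rw [hab] at hc1 hh1 hl1
    rw [hcd] at hc2 hh2 hl2
    by_cases h1 : k = j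
    · subst h1
      have hσj : σ' k = σ i := by
        rw [hσ, Equiv.Perm.mul_apply, Equiv.swap_apply_right]
      rw [hlj, hσj]
      refine ⟨glue hc2 hc1, ?_, ?_⟩
      · rw [head?_stable c v d b]; exact hh2
      · rw [List.getLast?_append_cons] at hl1 ⊢; exact hl1
    · by_cases h2 : k = i
      · subst h2
        have hσi : σ' k = σ j := by
          rw [hσ, Equiv.Perm.mul_apply, Equiv.swap_apply_left]
        rw [hli, hσi]
        refine ⟨glue hc1 hc2, ?_, ?_⟩
        · rw [head?_stable a v b d]; exact hh1
        · rw [List.getLast?_append_cons] at hl2 ⊢; exact hl2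
      · have hσk : σ' k = σ k := by
          rw [hσ, Equiv.Perm.mul_apply, Equiv.swap_apply_of_ne_of_ne h2 h1]
        rw [hlk k h2 h1, hσk]; exact hsys k
  · intro hD
    exact hD i j hne v
      (by rw [hli]; exact List.mem_append_right _ (List.mem_cons_self))
      (by rw [hlj]; exact List.mem_append_right _ (List.mem_cons_self))

lemma swap_sign {σ : Equiv.Perm (Fin t)} {l : Fin t → List Pt} {σ' l'}
    (h : SwapRel σ l σ' l') :
    Equiv.Perm.sign σ' = - Equiv.Perm.sign σ ∧ σ' ≠ σ := by
  obtain ⟨i, j, v, a, b, c, d, hij, -, -, -, -, -, hσ, -⟩ := h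
  have hne : i ≠ j := ne_of_lt hij
  constructor
  · rw [hσ, Equiv.Perm.sign_mul, Equiv.Perm.sign_swap hne, mul_neg_one]
  · rw [hσ]
    intro hc
    have h1 : σ * Equiv.swap i j = σ * 1 := by rwa [mul_one]
    exact hne ((Equiv.swap_eq_one_iff).1 (mul_left_cancel h1))

lemma sys_nodup {Q P : Fin t → Pt} {σ : Equiv.Perm (Fin t)} {l : Fin t → List Pt}
    (hsys : Sys Q P σ l) : ∀ k, (l k).Nodup := fun k => nodup_of_chain (hsys k).1

end LGV
theorem stmt_11 (t : ℕ) (Q P : Fin t → ℤ × ℤ)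
    (hyp : ∀ (σ : Equiv.Perm (Fin t)) (l : Fin t → List (ℤ × ℤ)),
      (∀ i, IsPathFromTo (l i) (Q i) (P (σ i))) →
      (∀ i j, i ≠ j → ∀ x, x ∈ l i → x ∉ l j) → σ = 1) :
    (Nat.card {l : Fin t → List (ℤ × ℤ) //
        (∀ i, IsPathFromTo (l i) (Q i) (P i)) ∧
        (∀ i j, i ≠ j → ∀ x, x ∈ l i → x ∉ l j)} : ℤ) =
      Matrix.det (Matrix.of fun i j : Fin t =>
        (Nat.card {l : List (ℤ × ℤ) // IsPathFromTo l (Q i) (P j)} : ℤ)) := by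
  classical
  have hTfin : ∀ σ : Equiv.Perm (Fin t),
      {l : Fin t → List LGV.Pt | ∀ i, IsPathFromTo (l i) (Q i) (P (σ i))}.Finite := by
    intro σ
    rw [← Set.finite_coe_iff]
    haveI : ∀ i : Fin t, Finite {x : List LGV.Pt // IsPathFromTo x (Q i) (P (σ i))} :=
      fun i => LGV.pathFinite _ _
    exact Finite.of_equiv _ (Equiv.subtypePiEquivPi
      (p := fun (i : Fin t) (x : List LGV.Pt) => IsPathFromTo x (Q i) (P (σ i)))).symm
  set TF : Equiv.Perm (Fin t) → Finset (Fin t → List LGV.Pt) :=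
    fun σ => (hTfin σ).toFinset with hTF
  set DF : Equiv.Perm (Fin t) → Finset (Fin t → List LGV.Pt) :=
    fun σ => (TF σ).filter (fun l => LGV.Disj l) with hDF
  set NF : Equiv.Perm (Fin t) → Finset (Fin t → List LGV.Pt) :=
    fun σ => (TF σ).filter (fun l => ¬ LGV.Disj l) with hNF
  have hmemTF : ∀ (σ : Equiv.Perm (Fin t)) l,
      l ∈ TF σ ↔ ∀ i, IsPathFromTo (l i) (Q i) (P (σ i)) :=
    fun σ l => Set.Finite.mem_toFinset _
  have hprod : ∀ σ : Equiv.Perm (Fin t),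
      (∏ i, (Nat.card {x : List LGV.Pt // IsPathFromTo x (Q i) (P (σ i))} : ℤ))
        = ((TF σ).card : ℤ) := by
    intro σ
    have h1 : ∏ i, Nat.card {x : List LGV.Pt // IsPathFromTo x (Q i) (P (σ i))}
        = Nat.card {l : Fin t → List LGV.Pt // ∀ i, IsPathFromTo (l i) (Q i) (P (σ i))} := by
      rw [← Nat.card_pi]
      exact (Nat.card_congr (Equiv.subtypePiEquivPi
        (p := fun (i : Fin t) (x : List LGV.Pt) => IsPathFromTo x (Q i) (P (σ i))))).symm
    have h2 : Nat.card {l : Fin t → List LGV.Pt // ∀ i, IsPathFromTo (l i) (Q i) (P (σ i))}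
        = (TF σ).card := Nat.card_eq_card_finite_toFinset (hTfin σ)
    rw [← Nat.cast_prod, h1, h2]
  have hdet : Matrix.det (Matrix.of fun i j : Fin t =>
        (Nat.card {l : List (ℤ × ℤ) // IsPathFromTo l (Q i) (P j)} : ℤ))
      = ∑ σ : Equiv.Perm (Fin t),
          ((Equiv.Perm.sign σ : ℤˣ) : ℤ) * ((TF σ).card : ℤ) := by
    rw [← Matrix.det_transpose, Matrix.det_apply']
    refine Finset.sum_congr rfl (fun σ _ => ?_)
    congr 1
    rw [← hprod σ]
    refine Finset.prod_congr rfl (fun i _ => ?_)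
    simp [Matrix.transpose_apply]
  have hsplit : ∀ σ : Equiv.Perm (Fin t),
      ((TF σ).card : ℤ) = ((DF σ).card : ℤ) + ((NF σ).card : ℤ) := by
    intro σ
    exact_mod_cast (Finset.card_filter_add_card_filter_not
      (s := TF σ) (p := fun l => LGV.Disj l)).symm
  have hDempty : ∀ σ : Equiv.Perm (Fin t), σ ≠ 1 → DF σ = ∅ := by
    intro σ hσ
    rw [Finset.eq_empty_iff_forall_notMem]
    intro l hl
    rw [hDF, Finset.mem_filter, hmemTF] at hl
    exact hσ (hyp σ l hl.1 hl.2)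
  have hsum : ∑ σ : Equiv.Perm (Fin t),
      ((Equiv.Perm.sign σ : ℤˣ) : ℤ) * ((DF σ).card : ℤ) = ((DF 1).card : ℤ) := by
    rw [Finset.sum_eq_single 1]
    · simp [Equiv.Perm.sign_one]
    · intro σ _ hσ; rw [hDempty σ hσ]; simp
    · intro h; exact absurd (Finset.mem_univ 1) h
  have hNzero : ∑ σ : Equiv.Perm (Fin t),
      ((Equiv.Perm.sign σ : ℤˣ) : ℤ) * ((NF σ).card : ℤ) = 0 := by
    have hstep : ∀ σ : Equiv.Perm (Fin t),
        ((Equiv.Perm.sign σ : ℤˣ) : ℤ) * ((NF σ).card : ℤ)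
          = ∑ _l ∈ NF σ, ((Equiv.Perm.sign σ : ℤˣ) : ℤ) := by
      intro σ; rw [Finset.sum_const, nsmul_eq_mul, mul_comm]
    rw [Finset.sum_congr rfl (fun σ _ => hstep σ), Finset.sum_sigma' Finset.univ NF
      (fun σ _ => ((Equiv.Perm.sign σ : ℤˣ) : ℤ))]
    have hmem : ∀ p : Σ _ : Equiv.Perm (Fin t), (Fin t → List LGV.Pt),
        p ∈ Finset.univ.sigma NF → LGV.Sys Q P p.1 p.2 ∧ ¬ LGV.Disj p.2 := by
      intro p hp
      rw [Finset.mem_sigma, hNF, Finset.mem_filter, hmemTF] at hp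
      exact ⟨hp.2.1, hp.2.2⟩
    have hex : ∀ (p : Σ _ : Equiv.Perm (Fin t), (Fin t → List LGV.Pt)),
        p ∈ Finset.univ.sigma NF →
        ∃ q : Σ _ : Equiv.Perm (Fin t), (Fin t → List LGV.Pt),
          LGV.SwapRel p.1 p.2 q.1 q.2 := by
      intro p hp
      obtain ⟨σ', l', h⟩ := LGV.swap_exists (hmem p hp).2
      exact ⟨⟨σ', l'⟩, h⟩
    have hrel : ∀ p hp, LGV.SwapRel p.1 p.2 ((hex p hp).choose).1 ((hex p hp).choose).2 :=
      fun p hp => (hex p hp).choose_spec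
    have hgmem : ∀ p hp, (hex p hp).choose ∈ Finset.univ.sigma NF := by
      intro p hp
      have h := LGV.swap_sys (hmem p hp).1 (hrel p hp)
      rw [Finset.mem_sigma, hNF, Finset.mem_filter, hmemTF]
      exact ⟨Finset.mem_univ _, h.1, h.2⟩
    refine Finset.sum_involution (fun p hp => (hex p hp).choose) ?_ ?_ hgmem ?_
    · intro p hp
      have h := (LGV.swap_sign (hrel p hp)).1
      rw [h, Units.val_neg]
      ring
    · intro p hp _
      intro hq
      exact (LGV.swap_sign (hrel p hp)).2 (congrArg Sigma.fst hq)
    · intro p hp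
      have hsys := (hmem p hp).1
      have h1 := hrel p hp
      have h2 := hrel _ (hgmem p hp)
      have hsym := LGV.swap_symm (LGV.sys_nodup hsys) h1
      have hndq := LGV.sys_nodup (LGV.swap_sys hsys h1).1
      obtain ⟨e1, e2⟩ := LGV.swap_unique hndq h2 hsym
      exact Sigma.ext e1 (heq_of_eq e2)
  rw [hdet, Finset.sum_congr rfl (fun σ _ => by rw [hsplit σ, mul_add]),
    Finset.sum_add_distrib, hsum, hNzero, add_zero]
  have hfin1 : {l : Fin t → List LGV.Pt | (∀ i, IsPathFromTo (l i) (Q i) (P i)) ∧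
      (∀ i j, i ≠ j → ∀ x, x ∈ l i → x ∉ l j)}.Finite :=
    (hTfin 1).subset (fun l hl i => by simpa using hl.1 i)
  have hc : Nat.card {l : Fin t → List (ℤ × ℤ) //
      (∀ i, IsPathFromTo (l i) (Q i) (P i)) ∧
      (∀ i j, i ≠ j → ∀ x, x ∈ l i → x ∉ l j)} = (DF 1).card := by
    have h0 : Nat.card {l : Fin t → List (ℤ × ℤ) //
        (∀ i, IsPathFromTo (l i) (Q i) (P i)) ∧
        (∀ i j, i ≠ j → ∀ x, x ∈ l i → x ∉ l j)} = hfin1.toFinset.card :=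
      Nat.card_eq_card_finite_toFinset hfin1
    rw [h0]
    congr 1
    apply Finset.ext
    intro l
    rw [Set.Finite.mem_toFinset, hDF, Finset.mem_filter, hmemTF]
    constructor
    · rintro ⟨h1, h2⟩
      exact ⟨fun i => by simpa using h1 i, h2⟩
    · rintro ⟨h1, h2⟩
      exact ⟨fun i => by simpa using h1 i, h2⟩
  rw [hc]
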